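/- Let Y be a topological space and let f : Y → ℝ be a continuous function with 1 ≤ f(y) ≤ 3 for all y ∈ Y. Define F : Y × ℝ → ℝ by F(y, s) = (1 − s²)·f(y). For t ∈ [1, 3], set M_t := {(y, s) ∈ Y × [−1, 1] : F(y, s) = t} and Y_t := {y ∈ Y : f(y) ≥ t}. Then the projection map (y, s) ↦ y restricts to a homeomorphism from M_t ∩ (Y × [−1, 0]) onto Y_t, and also restricts to a homeomorphism from M_t ∩ (Y × [0, 1]) onto Y_t. (The homeomorphism assertions of Lemma 5.1 of the paper.) -/

import Mathlib

lemma trace_cobordism_aux (Y : Type) [TopologicalSpace Y] (f : Y → ℝ) (hf : Continuous f)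
    (hf1 : ∀ y, 1 ≤ f y) (t : ℝ) (ht1 : 1 ≤ t) (ε : ℝ) (hε : ε = 1 ∨ ε = -1) :
    ∃ e : {p : Y × ℝ // (ε * p.2 ∈ Set.Icc (0 : ℝ) 1) ∧ (1 - p.2 ^ 2) * f p.1 = t} ≃ₜ
        {y : Y // t ≤ f y},
      ∀ p, (e p : Y) = (p : Y × ℝ).1 := by
  have hfne : ∀ y, f y ≠ 0 := fun y => by linarith [hf1 y]
  have hε2 : ε ^ 2 = 1 := by rcases hε with h | h <;> simp [h]
  set g : Y → ℝ := fun y => Real.sqrt (1 - t / f y) with hg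
  have hg_sq : ∀ y : Y, t ≤ f y → (g y) ^ 2 = 1 - t / f y := fun y hy => by
    rw [hg]
    exact Real.sq_sqrt (by
      rw [sub_nonneg, div_le_one (by linarith [hf1 y])]
      exact hy)
  have hg_mem : ∀ y : Y, t ≤ f y → g y ∈ Set.Icc (0:ℝ) 1 := by
    intro y hy
    refine ⟨Real.sqrt_nonneg _, ?_⟩
    have h0 : 0 < t / f y := div_pos (by linarith) (by linarith [hf1 y])
    exact Real.sqrt_le_one.mpr (by linarith)
  have hg_eq : ∀ y : Y, t ≤ f y → (1 - (ε * g y) ^ 2) * f y = t := by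
    intro y hy
    rw [mul_pow, hε2, one_mul, hg_sq y hy]
    field_simp
    rw [sub_sub_cancel, mul_div_assoc', mul_comm, mul_div_assoc, div_self (hfne y), mul_one]
  -- the equivalence
  have key : ∀ p : Y × ℝ, (ε * p.2 ∈ Set.Icc (0 : ℝ) 1) ∧ (1 - p.2 ^ 2) * f p.1 = t →
      t ≤ f p.1 ∧ p.2 = ε * g p.1 := by
    rintro ⟨y, s⟩ ⟨⟨hs0, hs1⟩, heq⟩
    have hsq : s ^ 2 = 1 - t / f y := by
      have h : 1 - s ^ 2 = t / f y := by
        rw [eq_div_iff (hfne y)]; linarith [heq]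
      linarith
    have hsq1 : s ^ 2 ≤ 1 := by
      have : (ε * s) ^ 2 ≤ 1 := by nlinarith
      rw [mul_pow, hε2, one_mul] at this
      exact this
    have hty : t ≤ f y := by
      have h1 : (1 - s ^ 2) ≤ 1 := by nlinarith
      nlinarith [hf1 y]
    refine ⟨hty, ?_⟩
    have : g y = ε * s := by
      show Real.sqrt (1 - t / f y) = ε * s
      have h2 : (ε * s) ^ 2 = 1 - t / f y := by rw [mul_pow, hε2, one_mul, hsq]
      rw [← h2, Real.sqrt_sq hs0]
    rw [this, ← mul_assoc, ← sq, hε2, one_mul]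
  have hgc : Continuous fun y : {y : Y // t ≤ f y} => ε * g y.1 := by
    apply continuous_const.mul
    exact (Real.continuous_sqrt.comp
      (continuous_const.sub ((continuous_const.div (hf.comp continuous_subtype_val)
        (fun y => hfne y.1)))))
  have hinv : ∀ y : {y : Y // t ≤ f y},
      (ε * (y.1, ε * g y.1).2 ∈ Set.Icc (0:ℝ) 1) ∧ (1 - (y.1, ε * g y.1).2 ^ 2) * f (y.1, ε * g y.1).1 = t := by
    intro y
    constructor
    · rw [← mul_assoc, ← sq, hε2, one_mul]; exact hg_mem y.1 y.2
    · exact hg_eq y.1 y.2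
  refine ⟨{
    toFun := fun p => ⟨(p : Y × ℝ).1, (key _ p.2).1⟩
    invFun := fun y => ⟨(y.1, ε * g y.1), hinv y⟩
    left_inv := fun p => by
      apply Subtype.ext
      apply Prod.ext
      · rfl
      · exact ((key _ p.2).2).symm
    right_inv := fun y => rfl
    continuous_toFun := ((continuous_fst.comp continuous_subtype_val).subtype_mk _)
    continuous_invFun := (((continuous_subtype_val).prodMk hgc).subtype_mk _) }, fun p => rfl⟩

theorem levelSet_of_trace_cobordism_homeomorph
    (Y : Type) [TopologicalSpace Y] (f : Y → ℝ) (hf : Continuous f)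
    (hf1 : ∀ y, 1 ≤ f y) (hf3 : ∀ y, f y ≤ 3)
    (t : ℝ) (ht : t ∈ Set.Icc (1 : ℝ) 3) :
    (∃ e : {p : Y × ℝ // p.2 ∈ Set.Icc (-1 : ℝ) 0 ∧ (1 - p.2 ^ 2) * f p.1 = t} ≃ₜ
        {y : Y // t ≤ f y},
      ∀ p, (e p : Y) = (p : Y × ℝ).1) ∧
    (∃ e : {p : Y × ℝ // p.2 ∈ Set.Icc (0 : ℝ) 1 ∧ (1 - p.2 ^ 2) * f p.1 = t} ≃ₜ
        {y : Y // t ≤ f y},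
      ∀ p, (e p : Y) = (p : Y × ℝ).1) := by
  obtain ⟨ht1, -⟩ := ht
  constructor
  · obtain ⟨e, he⟩ := trace_cobordism_aux Y f hf hf1 t ht1 (-1) (Or.inr rfl)
    have hset : ∀ p : Y × ℝ,
        (p.2 ∈ Set.Icc (-1 : ℝ) 0 ∧ (1 - p.2 ^ 2) * f p.1 = t) ↔
        ((-1 : ℝ) * p.2 ∈ Set.Icc (0 : ℝ) 1 ∧ (1 - p.2 ^ 2) * f p.1 = t) := by
      intro p
      constructor <;> rintro ⟨⟨h1, h2⟩, h3⟩ <;> exact ⟨⟨by linarith, by linarith⟩, h3⟩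
    let this : {p : Y × ℝ // p.2 ∈ Set.Icc (-1 : ℝ) 0 ∧ (1 - p.2 ^ 2) * f p.1 = t} ≃ₜ
        {p : Y × ℝ // (-1 : ℝ) * p.2 ∈ Set.Icc (0 : ℝ) 1 ∧ (1 - p.2 ^ 2) * f p.1 = t} :=
      Homeomorph.mk
        ⟨fun p => ⟨p.1, (hset p.1).1 p.2⟩, fun p => ⟨p.1, (hset p.1).2 p.2⟩,
          fun p => rfl, fun p => rfl⟩
        (continuous_subtype_val.subtype_mk _) (continuous_subtype_val.subtype_mk _)
    refine ⟨this.trans e, fun p => ?_⟩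
    rw [Homeomorph.trans_apply]
    rw [he (this p)]; rfl
  · obtain ⟨e, he⟩ := trace_cobordism_aux Y f hf hf1 t ht1 1 (Or.inl rfl)
    have hset : ∀ p : Y × ℝ,
        (p.2 ∈ Set.Icc (0 : ℝ) 1 ∧ (1 - p.2 ^ 2) * f p.1 = t) ↔
        ((1 : ℝ) * p.2 ∈ Set.Icc (0 : ℝ) 1 ∧ (1 - p.2 ^ 2) * f p.1 = t) := by
      intro p; rw [one_mul]
    let this : {p : Y × ℝ // p.2 ∈ Set.Icc (0 : ℝ) 1 ∧ (1 - p.2 ^ 2) * f p.1 = t} ≃ₜ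
        {p : Y × ℝ // (1 : ℝ) * p.2 ∈ Set.Icc (0 : ℝ) 1 ∧ (1 - p.2 ^ 2) * f p.1 = t} :=
      Homeomorph.mk
        ⟨fun p => ⟨p.1, (hset p.1).1 p.2⟩, fun p => ⟨p.1, (hset p.1).2 p.2⟩,
          fun p => rfl, fun p => rfl⟩
        (continuous_subtype_val.subtype_mk _) (continuous_subtype_val.subtype_mk _)
    refine ⟨this.trans e, fun p => ?_⟩
    rw [Homeomorph.trans_apply]
    rw [he (this p)]; rfl
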